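/- Let X be a set, Ω a domain on X, K_Ω : Ω → ℝ symmetric, and suppose 𝒞(K_Ω) is nonempty. Fix (x,y) ∈ (X × X) ∖ Ω (so x ≠ y). Then sup{K(x,y) : K ∈ 𝒞(K_Ω)} equals the infimum of ℛ_{xy}(M,F) over all admissible pairs (M,F) for (x,y) with m_{xy} < 0, and inf{K(x,y) : K ∈ 𝒞(K_Ω)} equals the supremum of ℛ_{xy}(M,F) over all admissible pairs (M,F) for (x,y) with m_{xy} > 0. -/

import Mathlib

/-- A reproducing kernel on a set `X`. -/
def IsKernel {X : Type*} (K : X → X → ℝ) : Prop :=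
  (∀ x y, K x y = K y x) ∧
  ∀ (n : ℕ) (α : Fin n → ℝ) (x : Fin n → X),
    0 ≤ ∑ i, ∑ j, α i * α j * K (x i) (x j)

/-- A domain on `X`: a symmetric subset of `X × X` containing the diagonal. -/
def IsCompletionDomain {X : Type*} (Ω : Set (X × X)) : Prop :=
  (∀ x y, (x, y) ∈ Ω ↔ (y, x) ∈ Ω) ∧ ∀ x, (x, x) ∈ Ω

/-- `K` is a completion of `KΩ` on the domain `Ω`. -/
def IsCompletion {X : Type*} (Ω : Set (X × X)) (KΩ : X → X → ℝ) (K : X → X → ℝ) : Prop :=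
  IsKernel K ∧ ∀ x y, (x, y) ∈ Ω → K x y = KΩ x y

/-- An admissible pair `(M, F)` for the point `(x, y) ∉ Ω`: a finite set `F` containing `x` and
`y`, and a symmetric positive semidefinite matrix indexed by `F` vanishing outside
`Ω ∪ {(x,y), (y,x)}`. -/
def Admissible {X : Type*} (Ω : Set (X × X)) (x y : X) (F : Finset X)
    (M : Matrix ↥F ↥F ℝ) : Prop :=
  M.PosSemidef ∧
    ∀ u v : ↥F, ((u : X), (v : X)) ∉ Ω ∪ {(x, y), (y, x)} → M u v = 0

open scoped Classical in
/-- The quantity `ℛ_{xy}(M, F)`. -/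
noncomputable def Rval {X : Type*} (Ω : Set (X × X)) (KΩ : X → X → ℝ)
    (F : Finset X) (M : Matrix ↥F ↥F ℝ) (a b : ↥F) : ℝ :=
  -(1 / (2 * M a b)) * ∑ u : ↥F, ∑ v : ↥F,
    if ((u : X), (v : X)) ∈ Ω then M u v * KΩ u v else 0

set_option linter.unusedSectionVars false

section Helpers

open Filter Topology

variable {ι : Type*} [Fintype ι] [DecidableEq ι]

lemma psd_form {M : Matrix ι ι ℝ} (h : M.PosSemidef) (w : ι → ℝ) :
    0 ≤ ∑ u, ∑ v, w u * w v * M u v := by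
  have := h.dotProduct_mulVec_nonneg w
  simp only [dotProduct, Matrix.mulVec, star_trivial, dotProduct] at this
  convert this using 1
  · rfl
  rw [eq_comm]
  refine Finset.sum_congr rfl fun u _ => ?_
  rw [Finset.mul_sum]
  exact Finset.sum_congr rfl fun v _ => by ring

/-- Positive semidefiniteness for plain functions. -/
def PsdFun (B : ι → ι → ℝ) : Prop :=
  (∀ u v, B u v = B v u) ∧ ∀ w : ι → ℝ, 0 ≤ ∑ u, ∑ v, w u * w v * B u v

lemma PsdFun.posSemidef {B : ι → ι → ℝ} (h : PsdFun B) :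
    Matrix.PosSemidef (Matrix.of B) := by
  refine Matrix.PosSemidef.of_dotProduct_mulVec_nonneg ?_ ?_
  · ext u v
    simp [Matrix.conjTranspose_apply, h.1 u v]
  · intro w
    have := h.2 w
    simp only [dotProduct, Matrix.mulVec, star_trivial]
    convert this using 1
    · rfl
    refine Finset.sum_congr rfl fun u _ => ?_
    rw [Finset.mul_sum]
    refine Finset.sum_congr rfl fun v _ => ?_
    show w u * (B u v * w v) = w u * w v * B u v
    ring

lemma Matrix.PosSemidef.psdFun {M : Matrix ι ι ℝ} (h : M.PosSemidef) :
    PsdFun (fun u v => M u v) := by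
  constructor
  · intro u v
    have h1 := h.1
    rw [Matrix.IsHermitian] at h1
    have := congrFun (congrFun h1 v) u
    simpa [Matrix.conjTranspose_apply] using this
  · intro w
    exact psd_form h w

lemma sum_sum_eq_of_support (f : ι → ι → ℝ) (s : Finset (ι × ι))
    (h : ∀ p : ι × ι, p ∉ s → f p.1 p.2 = 0) :
    ∑ u, ∑ v, f u v = ∑ p ∈ s, f p.1 p.2 := by
  rw [← Fintype.sum_prod_type']
  exact (Finset.sum_subset (Finset.subset_univ s) (fun p _ hp => h p hp)).symm

lemma psd_entry_sq_le {M : Matrix ι ι ℝ} (h : M.PosSemidef) (u v : ι) :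
    (M u v)^2 ≤ M u u * M v v := by
  rcases eq_or_ne u v with rfl | huv
  · rw [sq]
  · have hsym : M v u = M u v := (h.psdFun.1 v u)
    have key : ∀ s : ℝ, 0 ≤ M u u * (s*s) + (2 * M u v) * s + M v v := by
      intro s
      have := psd_form h (fun i => if i = u then s else if i = v then 1 else 0)
      rw [sum_sum_eq_of_support _ {(u,u),(u,v),(v,u),(v,v)} (by
        rintro ⟨a,b⟩ hab
        simp only [Finset.mem_insert, Finset.mem_singleton, Prod.mk.injEq, not_or] at hab
        by_cases ha : a = u <;> by_cases hb : b = u <;> by_cases ha' : a = v <;>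
          by_cases hb' : b = v <;> simp_all)] at this
      rw [Finset.sum_insert (by simp [huv]), Finset.sum_insert (by simp [huv, Ne.symm huv]),
        Finset.sum_insert (by simp [huv, Ne.symm huv]), Finset.sum_singleton] at this
      simp only [if_pos rfl, if_neg huv, if_neg (Ne.symm huv), if_true] at this
      rw [hsym] at this
      ring_nf at this ⊢
      linarith [this]
    have hd := discrim_le_zero key
    simp only [discrim] at hd
    nlinarith [hd]

lemma rank1_form (w α : ι → ℝ) :
    ∑ u, ∑ v, w u * w v * (α u * α v) = (∑ u, w u * α u)^2 := by
  rw [sq, Finset.sum_mul_sum]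
  exact Finset.sum_congr rfl fun u _ => Finset.sum_congr rfl fun v _ => by ring

lemma psdFun_rank1 (α : ι → ℝ) : PsdFun (fun u v => α u * α v) :=
  ⟨fun u v => by ring, fun w => by rw [rank1_form]; positivity⟩

lemma psdFun_diag_nonneg {B : ι → ι → ℝ} (h : PsdFun B) (u : ι) : 0 ≤ B u u := by
  have := h.2 (fun i => if i = u then 1 else 0)
  rwa [sum_sum_eq_of_support _ {(u,u)} (by
    rintro ⟨a,b⟩ hab
    simp only [Finset.mem_singleton, Prod.mk.injEq, not_and] at hab
    by_cases ha : a = u <;> by_cases hb : b = u <;> simp_all),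
    Finset.sum_singleton, if_pos rfl, one_mul, one_mul] at this

open scoped RealInnerProductSpace in
open scoped Classical in
lemma finite_duality (E : Set (ι × ι)) (hEs : ∀ u v, (u,v) ∈ E → (v,u) ∈ E)
    (hEd : ∀ u, (u,u) ∈ E) (g : ι → ι → ℝ) (hg : ∀ u v, (u,v) ∈ E → g u v = g v u)
    (hyp : ∀ M : Matrix ι ι ℝ, M.PosSemidef → (∀ u v, (u,v) ∉ E → M u v = 0) →
      0 ≤ ∑ u, ∑ v, M u v * g u v) :
    ∃ B : Matrix ι ι ℝ, B.PosSemidef ∧ ∀ u v, (u,v) ∈ E → B u v = g u v := by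
  let H := EuclideanSpace ℝ (ι × ι)
  let proj : (ι → ι → ℝ) → H :=
    fun B => (WithLp.equiv 2 ((ι × ι) → ℝ)).symm (fun p => if p ∈ E then B p.1 p.2 else 0)
  have hproj_apply : ∀ B q, proj B q = if q ∈ E then B q.1 q.2 else 0 := fun B q => rfl
  -- inner product formula
  have hinner : ∀ (a b : H), ⟪a, b⟫ = ∑ q : ι × ι, a q * b q := by
    intro a b
    rw [PiLp.inner_apply]
    exact Finset.sum_congr rfl fun q _ => by rw [RCLike.inner_apply]; simp; ring
  -- the cone
  let C : ConvexCone ℝ H :=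
    { carrier := {p : H | ∃ B, PsdFun B ∧ p = proj B}
      smul_mem' := by
        rintro c hc p ⟨B, hB, rfl⟩
        refine ⟨fun u v => c * B u v, ⟨fun u v => by simp only []; rw [hB.1 u v], fun w => ?_⟩, ?_⟩
        · have := hB.2 w
          have h2 : ∑ u, ∑ v, w u * w v * (c * B u v) = c * ∑ u, ∑ v, w u * w v * B u v := by
            rw [Finset.mul_sum]
            refine Finset.sum_congr rfl fun u _ => ?_
            rw [Finset.mul_sum]
            exact Finset.sum_congr rfl fun v _ => by ring
          rw [h2]
          positivity
        · apply (WithLp.equiv 2 ((ι × ι) → ℝ)).injective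
          funext q
          show (c • proj B) q = (if q ∈ E then c * B q.1 q.2 else 0)
          rw [PiLp.smul_apply, hproj_apply]
          by_cases hq : q ∈ E <;> simp [hq]
      add_mem' := by
        rintro p ⟨B, hB, rfl⟩ p' ⟨B', hB', rfl⟩
        refine ⟨fun u v => B u v + B' u v, ⟨fun u v => by simp only []; rw [hB.1 u v, hB'.1 u v], fun w => ?_⟩, ?_⟩
        · have h1 := hB.2 w
          have h2 := hB'.2 w
          have h3 : ∑ u, ∑ v, w u * w v * (B u v + B' u v)
              = (∑ u, ∑ v, w u * w v * B u v) + ∑ u, ∑ v, w u * w v * B' u v := by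
            rw [← Finset.sum_add_distrib]
            refine Finset.sum_congr rfl fun u _ => ?_
            rw [← Finset.sum_add_distrib]
            exact Finset.sum_congr rfl fun v _ => by ring
          rw [h3]
          linarith
        · apply (WithLp.equiv 2 ((ι × ι) → ℝ)).injective
          funext q
          show (proj B + proj B') q = (if q ∈ E then B q.1 q.2 + B' q.1 q.2 else 0)
          rw [PiLp.add_apply, hproj_apply, hproj_apply]
          by_cases hq : q ∈ E <;> simp [hq] }
  have hCmem : ∀ p : H, p ∈ C ↔ ∃ B, PsdFun B ∧ p = proj B := fun p => Iff.rfl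
  -- closedness of the cone
  have hCclosed : IsClosed (C : Set H) := by
    apply IsSeqClosed.isClosed
    intro f p hf hfp
    have hf' : ∀ n, ∃ B, PsdFun B ∧ f n = proj B := hf
    choose Bs hBs hfeq using hf'
    have hcont : ∀ q : ι × ι, Continuous (fun x : H => x q) :=
      fun q => (continuous_apply q).comp (PiLp.continuous_ofLp 2 fun _ : ι × ι => ℝ)
    have hcoord : ∀ q, Tendsto (fun n => f n q) atTop (𝓝 (p q)) :=
      fun q => ((hcont q).tendsto p).comp hfp
    have hdiag : ∀ (u : ι) (n : ℕ), Bs n u u = f n (u,u) := by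
      intro u n
      rw [hfeq n, hproj_apply]
      simp [hEd u]
    have hbdd : ∀ u : ι, ∃ r : ℝ, ∀ n, Bs n u u ≤ r := by
      intro u
      obtain ⟨r, hr⟩ := (hcoord (u,u)).bddAbove_range
      exact ⟨r, fun n => by rw [hdiag u n]; exact hr (Set.mem_range_self n)⟩
    choose r hr using hbdd
    set R : ℝ := ∑ u, |r u| with hR
    have hRnn : 0 ≤ R := Finset.sum_nonneg fun u _ => abs_nonneg _
    have hdiagR : ∀ n u, Bs n u u ≤ R := by
      intro n u
      calc Bs n u u ≤ r u := hr u n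
        _ ≤ |r u| := le_abs_self _
        _ ≤ R := Finset.single_le_sum (fun i _ => abs_nonneg (r i)) (Finset.mem_univ u)
    have hentry : ∀ (n : ℕ) (u v : ι), Bs n u v ∈ Set.Icc (-R) R := by
      intro n u v
      have hsq : (Bs n u v)^2 ≤ Bs n u u * Bs n v v := psd_entry_sq_le (hBs n).posSemidef u v
      have h0v := psdFun_diag_nonneg (hBs n) v
      have hsq2 : (Bs n u v)^2 ≤ R^2 := by
        calc (Bs n u v)^2 ≤ Bs n u u * Bs n v v := hsq
          _ ≤ R * R := mul_le_mul (hdiagR n u) (hdiagR n v) h0v hRnn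
          _ = R^2 := (sq R).symm
      have habs : |Bs n u v| ≤ R := by
        calc |Bs n u v| = Real.sqrt ((Bs n u v)^2) := (Real.sqrt_sq_eq_abs _).symm
          _ ≤ Real.sqrt (R^2) := Real.sqrt_le_sqrt hsq2
          _ = R := Real.sqrt_sq hRnn
      exact Set.mem_Icc.mpr (abs_le.mp habs)
    set S : Set (ι → ι → ℝ) := Set.univ.pi (fun _ : ι => Set.univ.pi fun _ : ι => Set.Icc (-R) R)
      with hS
    have hScomp : IsCompact S :=
      isCompact_univ_pi fun _ => isCompact_univ_pi fun _ => isCompact_Icc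
    have hev : ∀ u v : ι, Continuous (fun B : ι → ι → ℝ => B u v) :=
      fun u v => (continuous_apply v).comp (continuous_apply u)
    have hPsdClosed : IsClosed {B : ι → ι → ℝ | PsdFun B} := by
      have heq : {B : ι → ι → ℝ | PsdFun B} =
          (⋂ u, ⋂ v, {B : ι → ι → ℝ | B u v = B v u}) ∩
            ⋂ w : ι → ℝ, {B | 0 ≤ ∑ u, ∑ v, w u * w v * B u v} := by
        ext B
        simp only [Set.mem_inter_iff, Set.mem_iInter, Set.mem_setOf_eq, PsdFun]
      rw [heq]
      refine IsClosed.inter (isClosed_iInter fun u => isClosed_iInter fun v =>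
        isClosed_eq (hev u v) (hev v u)) (isClosed_iInter fun w => ?_)
      refine isClosed_le continuous_const ?_
      refine continuous_finset_sum _ fun u _ => continuous_finset_sum _ fun v _ => ?_
      exact continuous_const.mul (hev u v)
    have hmem : ∀ n, Bs n ∈ S ∩ {B | PsdFun B} :=
      fun n => ⟨Set.mem_univ_pi.mpr fun u => Set.mem_univ_pi.mpr fun v => hentry n u v, hBs n⟩
    obtain ⟨Binf, hBinfmem, φ, hφ, hconv⟩ :=
      (hScomp.inter_right hPsdClosed).tendsto_subseq hmem
    have hprojcont : Continuous proj := by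
      show Continuous fun B : ι → ι → ℝ =>
        (WithLp.equiv 2 ((ι × ι) → ℝ)).symm (fun p => if p ∈ E then B p.1 p.2 else 0)
      refine Continuous.comp (PiLp.continuous_toLp 2 fun _ : ι × ι => ℝ) ?_
      refine continuous_pi fun q => ?_
      by_cases hq : q ∈ E
      · simpa only [if_pos hq] using hev q.1 q.2
      · simpa only [if_neg hq] using continuous_const
    refine ⟨Binf, hBinfmem.2, ?_⟩
    have h1 : Tendsto (fun n => proj (Bs (φ n))) atTop (𝓝 (proj Binf)) :=
      (hprojcont.tendsto _).comp hconv
    have h2 : Tendsto (fun n => proj (Bs (φ n))) atTop (𝓝 p) := by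
      have heq2 : (fun n => proj (Bs (φ n))) = f ∘ φ := by
        funext n
        exact (hfeq (φ n)).symm
      rw [heq2]
      exact hfp.comp hφ.tendsto_atTop
    exact tendsto_nhds_unique h2 h1
  -- either `proj g` is in the cone, and we win, or we separate and contradict `hyp`
  by_cases hb : proj g ∈ C
  · obtain ⟨B, hB, hBeq⟩ := hb
    refine ⟨Matrix.of B, hB.posSemidef, fun u v huv => ?_⟩
    have h3 : proj g (u,v) = proj B (u,v) := by rw [hBeq]
    rw [hproj_apply, hproj_apply, if_pos huv, if_pos huv] at h3
    exact h3.symm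
  exfalso
  have hCne : (C : Set H).Nonempty := by
    refine ⟨proj (fun _ _ => 0), (hCmem _).mpr ⟨fun _ _ => 0, ⟨fun _ _ => rfl, fun w => ?_⟩, rfl⟩⟩
    simp
  have hzero : (0 : H) ∈ C := by
    refine ⟨fun _ _ => 0, ⟨fun _ _ => rfl, fun w => by simp⟩, ?_⟩
    ext q
    show (0 : ℝ) = if q ∈ E then (0 : ℝ) else 0
    simp
  let P : ProperCone ℝ H :=
    { carrier := C
      add_mem' := fun ha hb => C.add_mem ha hb
      zero_mem' := hzero
      smul_mem' := fun c p hp => by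
        rcases eq_zero_or_pos c with h | h
        · rw [h, zero_smul]
          exact hzero
        · exact C.smul_mem (show (0:ℝ) < c from h) hp
      isClosed' := hCclosed }
  obtain ⟨y, hy1, hy2⟩ :=
    ProperCone.hyperplane_separation' P (x₀ := proj g) hb
  -- key symmetrization computation
  have half_sym : ∀ (h : ι → ι → ℝ), (∀ u v, (u,v) ∈ E → h u v = h v u) →
      ∑ u, ∑ v, (if (u,v) ∈ E then (y (u,v) + y (v,u))/2 else 0) * h u v
        = ∑ u, ∑ v, (if (u,v) ∈ E then y (u,v) * h u v else 0) := by
    intro h hh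
    have hsplit : ∀ u v, (if (u,v) ∈ E then (y (u,v) + y (v,u))/2 else 0) * h u v
        = (1/2) * ((if (u,v) ∈ E then y (u,v) * h u v else 0)
            + (if (u,v) ∈ E then y (v,u) * h u v else 0)) := by
      intro u v
      by_cases huv : (u,v) ∈ E <;> simp [huv] <;> ring
    have hswap : ∑ u, ∑ v, (if (u,v) ∈ E then y (v,u) * h u v else 0)
        = ∑ u, ∑ v, (if (u,v) ∈ E then y (u,v) * h u v else 0) := by
      rw [Finset.sum_comm]
      refine Finset.sum_congr rfl fun a _ => Finset.sum_congr rfl fun b _ => ?_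
      by_cases hab : (a,b) ∈ E
      · rw [if_pos (hEs a b hab), if_pos hab, hh a b hab]
      · rw [if_neg (fun hba => hab (hEs b a hba)), if_neg hab]
    calc ∑ u, ∑ v, (if (u,v) ∈ E then (y (u,v) + y (v,u))/2 else 0) * h u v
        = ∑ u, ∑ v, (1/2) * ((if (u,v) ∈ E then y (u,v) * h u v else 0)
            + (if (u,v) ∈ E then y (v,u) * h u v else 0)) := by
          exact Finset.sum_congr rfl fun u _ => Finset.sum_congr rfl fun v _ => hsplit u v
      _ = (1/2) * ((∑ u, ∑ v, (if (u,v) ∈ E then y (u,v) * h u v else 0))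
            + ∑ u, ∑ v, (if (u,v) ∈ E then y (v,u) * h u v else 0)) := by
          rw [← Finset.sum_add_distrib, Finset.mul_sum]
          refine Finset.sum_congr rfl fun u _ => ?_
          rw [← Finset.sum_add_distrib, Finset.mul_sum]
      _ = ∑ u, ∑ v, (if (u,v) ∈ E then y (u,v) * h u v else 0) := by
          rw [hswap]; ring
  -- inner product with `proj h` as a double sum
  have hinnerproj : ∀ h : ι → ι → ℝ,
      ⟪proj h, y⟫ = ∑ u, ∑ v, (if (u,v) ∈ E then h u v * y (u,v) else 0) := by
    intro h
    rw [hinner]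
    rw [← Fintype.sum_prod_type']
    refine Finset.sum_congr rfl fun q _ => ?_
    rw [hproj_apply]
    by_cases hq : q ∈ E <;> simp [hq]
  -- the separating functional gives a PSD matrix supported on E
  set M : Matrix ι ι ℝ :=
    Matrix.of (fun u v => if (u,v) ∈ E then (y (u,v) + y (v,u))/2 else 0) with hM
  have hMapp : ∀ u v, M u v = if (u,v) ∈ E then (y (u,v) + y (v,u))/2 else 0 :=
    fun u v => rfl
  have hMpsd : M.PosSemidef := by
    refine PsdFun.posSemidef ⟨fun u v => ?_, fun w => ?_⟩
    · simp only []
      by_cases huv : (u,v) ∈ E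
      · rw [if_pos huv, if_pos (hEs u v huv)]
        ring
      · rw [if_neg huv, if_neg (fun h => huv (hEs v u h))]
    · have hcalc : ∑ u, ∑ v, w u * w v *
          (if (u,v) ∈ E then (y (u,v) + y (v,u))/2 else 0)
          = ∑ u, ∑ v, (if (u,v) ∈ E then (y (u,v) + y (v,u))/2 else 0) * (w u * w v) := by
        exact Finset.sum_congr rfl fun u _ => Finset.sum_congr rfl fun v _ => by ring
      rw [hcalc, half_sym (fun u v => w u * w v) (fun u v _ => by ring)]
      have := hy1 (proj (fun u v => w u * w v)) ((hCmem _).mpr ⟨_, psdFun_rank1 w, rfl⟩)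
      rw [hinnerproj (fun u v => w u * w v)] at this
      convert this using 2 with u
      refine Finset.sum_congr rfl fun v _ => ?_
      by_cases huv : (u,v) ∈ E <;> simp [huv] <;> ring
  have hMsupp : ∀ u v, (u,v) ∉ E → M u v = 0 := by
    intro u v huv
    rw [hMapp, if_neg huv]
  have hfinal := hyp M hMpsd hMsupp
  have hcalc2 : ∑ u, ∑ v, M u v * g u v
      = ∑ u, ∑ v, (if (u,v) ∈ E then y (u,v) * g u v else 0) := by
    rw [← half_sym g hg]
    exact Finset.sum_congr rfl fun u _ => Finset.sum_congr rfl fun v _ => rfl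
  rw [hcalc2] at hfinal
  rw [hinnerproj g] at hy2
  have hflip : ∑ u, ∑ v, (if (u,v) ∈ E then g u v * y (u,v) else 0)
      = ∑ u, ∑ v, (if (u,v) ∈ E then y (u,v) * g u v else 0) := by
    refine Finset.sum_congr rfl fun u _ => Finset.sum_congr rfl fun v _ => ?_
    by_cases huv : (u,v) ∈ E <;> simp [huv] <;> ring
  rw [hflip] at hy2
  linarith


end Helpers

/-! ### Bridge lemmas -/

/-- A kernel has nonnegative quadratic forms over any finite index set. -/
lemma kernel_finset_form {X : Type*} {K : X → X → ℝ} (hK : IsKernel K)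
    (G : Finset X) (α : ↥G → ℝ) :
    0 ≤ ∑ u : ↥G, ∑ v : ↥G, α u * α v * K ↑u ↑v := by
  classical
  let e : Fin (Fintype.card ↥G) ≃ ↥G := (Fintype.equivFin ↥G).symm
  have := hK.2 (Fintype.card ↥G) (fun i => α (e i)) (fun i => ↑(e i))
  calc (0:ℝ) ≤ ∑ i, ∑ j, α (e i) * α (e j) * K ↑(e i) ↑(e j) := this
    _ = ∑ u : ↥G, ∑ v : ↥G, α u * α v * K ↑u ↑v := by
        rw [← Equiv.sum_comp e (fun u => ∑ v : ↥G, α u * α v * K ↑u ↑v)]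
        refine Finset.sum_congr rfl fun i _ => ?_
        rw [← Equiv.sum_comp e (fun v => α (e i) * α v * K ↑(e i) ↑v)]

lemma kernel_gram_psdFun {X : Type*} {K : X → X → ℝ} (hK : IsKernel K) (G : Finset X) :
    PsdFun (fun u v : ↥G => K ↑u ↑v) :=
  ⟨fun u v => hK.1 ↑u ↑v, fun w => kernel_finset_form hK G w⟩

/-- Pairing of a PSD matrix with a PSD function is nonnegative. -/
lemma psd_pairing_nonneg {ι : Type*} [Fintype ι] [DecidableEq ι]
    {M : Matrix ι ι ℝ} (hM : M.PosSemidef) {G : ι → ι → ℝ} (hG : PsdFun G) :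
    0 ≤ ∑ u, ∑ v, M u v * G u v := by
  obtain ⟨m, A, hA⟩ := Matrix.posSemidef_iff_eq_sum_vecMulVec.mp hM
  have hAe : ∀ u v, M u v = ∑ k, A k u * A k v := by
    intro u v
    rw [hA, Matrix.sum_apply]
    simp [Matrix.vecMulVec_apply]
  calc (0:ℝ) ≤ ∑ k, ∑ u, ∑ v, (A k u) * (A k v) * G u v :=
        Finset.sum_nonneg fun k _ => hG.2 (A k)
    _ = ∑ u, ∑ k, ∑ v, (A k u) * (A k v) * G u v := Finset.sum_comm
    _ = ∑ u, ∑ v, ∑ k, (A k u) * (A k v) * G u v :=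
        Finset.sum_congr rfl fun u _ => Finset.sum_comm
    _ = ∑ u, ∑ v, M u v * G u v := by
        refine Finset.sum_congr rfl fun u _ => Finset.sum_congr rfl fun v _ => ?_
        rw [hAe u v, Finset.sum_mul]

open scoped Classical in
lemma admissible_decomp {X : Type*} (Ω : Set (X × X)) (hΩ : IsCompletionDomain Ω)
    (KΩ : X → X → ℝ) (x y : X) (hxy : (x, y) ∉ Ω)
    (F : Finset X) (hx : x ∈ F) (hy : y ∈ F) (M : Matrix ↥F ↥F ℝ)
    (hM : Admissible Ω x y F M)
    (Kf : X → X → ℝ) (hKΩf : ∀ u v, (u,v) ∈ Ω → Kf u v = KΩ u v) (hKs : Kf x y = Kf y x) :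
    ∑ u : ↥F, ∑ v : ↥F, M u v * Kf ↑u ↑v
      = (∑ u : ↥F, ∑ v : ↥F, if ((u : X), (v : X)) ∈ Ω then M u v * KΩ ↑u ↑v else 0)
        + 2 * M ⟨x,hx⟩ ⟨y,hy⟩ * Kf x y := by
  have hxny : x ≠ y := fun h => hxy (h ▸ hΩ.2 x)
  have hyx : (y,x) ∉ Ω := fun h => hxy ((hΩ.1 x y).mpr h)
  have hsplit : ∀ u v : ↥F, M u v * Kf ↑u ↑v
      = (if ((u:X),(v:X)) ∈ Ω then M u v * KΩ ↑u ↑v else 0)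
        + (if ((u:X),(v:X)) ∈ Ω then 0 else M u v * Kf ↑u ↑v) := by
    intro u v
    by_cases h : ((u:X),(v:X)) ∈ Ω
    · rw [if_pos h, if_pos h, hKΩf _ _ h, add_zero]
    · rw [if_neg h, if_neg h, zero_add]
  have hstep : ∑ u : ↥F, ∑ v : ↥F, M u v * Kf ↑u ↑v
      = (∑ u : ↥F, ∑ v : ↥F, if ((u : X), (v : X)) ∈ Ω then M u v * KΩ ↑u ↑v else 0)
        + ∑ u : ↥F, ∑ v : ↥F, (if ((u:X),(v:X)) ∈ Ω then 0 else M u v * Kf ↑u ↑v) := by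
    rw [← Finset.sum_add_distrib]
    refine Finset.sum_congr rfl fun u _ => ?_
    rw [← Finset.sum_add_distrib]
    exact Finset.sum_congr rfl fun v _ => hsplit u v
  rw [hstep]
  congr 1
  have hpairne : ((⟨x,hx⟩ : ↥F), (⟨y,hy⟩ : ↥F)) ≠ ((⟨y,hy⟩ : ↥F), (⟨x,hx⟩ : ↥F)) := by
    simp [Prod.ext_iff, Subtype.ext_iff, hxny]
  rw [sum_sum_eq_of_support _ ({((⟨x,hx⟩ : ↥F), (⟨y,hy⟩ : ↥F)), ((⟨y,hy⟩ : ↥F), (⟨x,hx⟩ : ↥F))})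
    (by
      rintro ⟨u, v⟩ hp
      simp only [Finset.mem_insert, Finset.mem_singleton, Prod.mk.injEq, not_or, not_and] at hp
      by_cases h : ((u:X),(v:X)) ∈ Ω
      · simp [h]
      · rw [if_neg h]
        have hM0 : M u v = 0 := by
          apply hM.2
          intro hmem
          rcases hmem with hmem | hmem
          · exact h hmem
          · rcases hmem with hmem | hmem
            · have hu : u = ⟨x,hx⟩ := Subtype.ext (congrArg Prod.fst hmem)
              have hv : v = ⟨y,hy⟩ := Subtype.ext (congrArg Prod.snd hmem)
              exact hp.1 hu hv
            · have hu : u = ⟨y,hy⟩ := Subtype.ext (congrArg Prod.fst hmem)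
              have hv : v = ⟨x,hx⟩ := Subtype.ext (congrArg Prod.snd hmem)
              exact hp.2 hu hv
        rw [hM0, zero_mul]),
    Finset.sum_pair hpairne]
  have hMsym : M ⟨y,hy⟩ ⟨x,hx⟩ = M ⟨x,hx⟩ ⟨y,hy⟩ := hM.1.psdFun.1 _ _
  rw [if_neg hxy, if_neg hyx, hMsym, ← hKs]
  ring

open scoped Classical in
lemma completion_pairing {X : Type*} (Ω : Set (X × X)) (hΩ : IsCompletionDomain Ω)
    (KΩ : X → X → ℝ) (x y : X) (hxy : (x, y) ∉ Ω)
    (F : Finset X) (hx : x ∈ F) (hy : y ∈ F) (M : Matrix ↥F ↥F ℝ)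
    (hM : Admissible Ω x y F M) {K : X → X → ℝ} (hK : IsCompletion Ω KΩ K) :
    0 ≤ (∑ u : ↥F, ∑ v : ↥F, if ((u : X), (v : X)) ∈ Ω then M u v * KΩ ↑u ↑v else 0)
        + 2 * M ⟨x,hx⟩ ⟨y,hy⟩ * K x y := by
  rw [← admissible_decomp Ω hΩ KΩ x y hxy F hx hy M hM K hK.2 (hK.1.1 x y)]
  exact psd_pairing_nonneg hM.1 (kernel_gram_psdFun hK.1 F)

lemma helper_le {m s c : ℝ} (hm : m < 0) (h : 0 ≤ c + 2*m*s) : s ≤ -(1/(2*m))*c := by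
  have hm' : 2*m ≠ 0 := by intro h0; nlinarith
  have h2 : -(1/(2*m))*c*(2*m) = -c := by have := hm.ne; field_simp
  by_contra h'
  push_neg at h'
  have h3 : 2*m*s < 2*m*(-(1/(2*m))*c) :=
    mul_lt_mul_of_neg_left h' (by linarith : 2*m < 0)
  nlinarith [h2, h3]

lemma helper_ge {m s c : ℝ} (hm : 0 < m) (h : 0 ≤ c + 2*m*s) : -(1/(2*m))*c ≤ s := by
  have hm' : 2*m ≠ 0 := by intro h0; nlinarith
  have h2 : -(1/(2*m))*c*(2*m) = -c := by field_simp
  by_contra h'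
  push_neg at h'
  have h3 : 2*m*s < 2*m*(-(1/(2*m))*c) :=
    mul_lt_mul_of_pos_left h' (by linarith : 0 < 2*m)
  nlinarith [h2, h3]

lemma helper_Qneg {m t c : ℝ} (hm : m < 0) (ht : t ≤ -(1/(2*m))*c) : 0 ≤ c + 2*m*t := by
  have hm' : 2*m ≠ 0 := by intro h0; nlinarith
  have h2 : -(1/(2*m))*c*(2*m) = -c := by have := hm.ne; field_simp
  have h3 : 2*m*(-(1/(2*m))*c) ≤ 2*m*t :=
    mul_le_mul_of_nonpos_left ht (by linarith : 2*m ≤ 0)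
  nlinarith [h2, h3]

lemma helper_Qpos {m t c : ℝ} (hm : 0 < m) (ht : -(1/(2*m))*c ≤ t) : 0 ≤ c + 2*m*t := by
  have hm' : 2*m ≠ 0 := by intro h0; nlinarith
  have h2 : -(1/(2*m))*c*(2*m) = -c := by field_simp
  have h3 : 2*m*(-(1/(2*m))*c) ≤ 2*m*t :=
    mul_le_mul_of_nonneg_left ht (by linarith : 0 ≤ 2*m)
  nlinarith [h2, h3]

open Filter Topology in
open scoped Classical in
lemma exists_completion_with_value {X : Type*}
    (Ω : Set (X × X)) (hΩ : IsCompletionDomain Ω) (KΩ : X → X → ℝ)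
    (hsymm : ∀ u v, (u, v) ∈ Ω → KΩ u v = KΩ v u)
    (x y : X) (hxy : (x, y) ∉ Ω) (t : ℝ)
    (hQ : ∀ (F : Finset X) (hx : x ∈ F) (hy : y ∈ F) (M : Matrix ↥F ↥F ℝ),
        Admissible Ω x y F M →
        0 ≤ (∑ u : ↥F, ∑ v : ↥F, if ((u : X), (v : X)) ∈ Ω then M u v * KΩ ↑u ↑v else 0)
            + 2 * M ⟨x,hx⟩ ⟨y,hy⟩ * t) :
    ∃ K : X → X → ℝ, IsCompletion Ω KΩ K ∧ K x y = t := by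
  have hxny : x ≠ y := fun h => hxy (h ▸ hΩ.2 x)
  have hyx : (y,x) ∉ Ω := fun h => hxy ((hΩ.1 x y).mpr h)
  set c : X → X → ℝ := fun u v => Real.sqrt (KΩ u u * KΩ v v) with hc
  set box : Set (X → X → ℝ) :=
    Set.univ.pi (fun u => Set.univ.pi (fun v => Set.Icc (-(c u v)) (c u v))) with hbox
  have hboxmem : ∀ K : X → X → ℝ,
      K ∈ box ↔ ∀ u v : X, K u v ∈ Set.Icc (-(c u v)) (c u v) := by
    intro K
    rw [hbox]
    constructor
    · intro h u v
      exact Set.mem_univ_pi.mp (Set.mem_univ_pi.mp h u) v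
    · intro h
      exact Set.mem_univ_pi.mpr fun u => Set.mem_univ_pi.mpr fun v => h u v
  have hboxcompact : IsCompact box :=
    isCompact_univ_pi fun u => isCompact_univ_pi fun v => isCompact_Icc
  have hev : ∀ u v : X, Continuous (fun K : X → X → ℝ => K u v) :=
    fun u v => (continuous_apply v).comp (continuous_apply u)
  set Gf : Finset X → Finset X := fun F => F ∪ {x, y} with hGf
  have hxG : ∀ F, x ∈ Gf F := fun F => Finset.mem_union_right _ (by simp)
  have hyG : ∀ F, y ∈ Gf F := fun F => Finset.mem_union_right _ (by simp)
  set CF : Finset X → Set (X → X → ℝ) := fun F =>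
    (box ∩ {K | K x y = t})
      ∩ ((⋂ (u : X) (_ : u ∈ Gf F) (v : X) (_ : v ∈ Gf F),
          ((⋂ (_ : (u,v) ∈ Ω), {K : X → X → ℝ | K u v = KΩ u v})
            ∩ {K : X → X → ℝ | K u v = K v u}))
        ∩ ⋂ (α : X → ℝ),
            {K : X → X → ℝ | 0 ≤ ∑ u ∈ Gf F, ∑ v ∈ Gf F, α u * α v * K u v}) with hCF
  have hCFmem : ∀ (F : Finset X) (K : X → X → ℝ), K ∈ CF F ↔
      (((∀ u v : X, K u v ∈ Set.Icc (-(c u v)) (c u v)) ∧ K x y = t)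
      ∧ ((∀ u ∈ Gf F, ∀ v ∈ Gf F, ((u,v) ∈ Ω → K u v = KΩ u v) ∧ K u v = K v u)
        ∧ ∀ α : X → ℝ, 0 ≤ ∑ u ∈ Gf F, ∑ v ∈ Gf F, α u * α v * K u v)) := by
    intro F K
    constructor
    · rintro ⟨⟨h1, h2⟩, ⟨h3, h4⟩⟩
      refine ⟨⟨(hboxmem K).mp h1, h2⟩, ⟨?_, fun α => Set.mem_iInter.mp h4 α⟩⟩
      intro u hu v hv
      have := Set.mem_iInter.mp (Set.mem_iInter.mp (Set.mem_iInter.mp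
        (Set.mem_iInter.mp h3 u) hu) v) hv
      exact ⟨fun hw => Set.mem_iInter.mp this.1 hw, this.2⟩
    · rintro ⟨⟨h1, h2⟩, ⟨h3, h4⟩⟩
      refine ⟨⟨(hboxmem K).mpr h1, h2⟩, ⟨?_, Set.mem_iInter.mpr fun α => h4 α⟩⟩
      refine Set.mem_iInter.mpr fun u => Set.mem_iInter.mpr fun hu =>
        Set.mem_iInter.mpr fun v => Set.mem_iInter.mpr fun hv =>
        ⟨Set.mem_iInter.mpr fun hw => (h3 u hu v hv).1 hw, (h3 u hu v hv).2⟩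
  have hCFclosed : ∀ F, IsClosed (CF F) := by
    intro F
    refine IsClosed.inter (IsClosed.inter ?_ (isClosed_eq (hev x y) continuous_const))
      (IsClosed.inter ?_ ?_)
    · exact isClosed_set_pi fun u _ => isClosed_set_pi fun v _ => isClosed_Icc
    · refine isClosed_iInter fun u => isClosed_iInter fun _ =>
        isClosed_iInter fun v => isClosed_iInter fun _ => ?_
      exact (isClosed_iInter fun _ => isClosed_eq (hev u v) continuous_const).inter
        (isClosed_eq (hev u v) (hev v u))
    · refine isClosed_iInter fun α => isClosed_le continuous_const ?_
      exact continuous_finset_sum _ fun u _ =>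
        continuous_finset_sum _ fun v _ => continuous_const.mul (hev u v)
  have hCFcompact : ∀ F, IsCompact (CF F) := fun F =>
    IsCompact.of_isClosed_subset hboxcompact (hCFclosed F) (fun K hK => hK.1.1)
  have hmono : ∀ F F' : Finset X, F ⊆ F' → CF F' ⊆ CF F := by
    intro F F' hFF' K hK
    rw [hCFmem] at hK ⊢
    have hGG' : Gf F ⊆ Gf F' := Finset.union_subset_union hFF' (Finset.Subset.refl _)
    refine ⟨hK.1, ⟨fun u hu v hv => hK.2.1 u (hGG' hu) v (hGG' hv), ?_⟩⟩
    intro α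
    have h1 := hK.2.2 (fun a => if a ∈ Gf F then α a else 0)
    have hinner : ∀ u : X, ∑ v ∈ Gf F', (if u ∈ Gf F then α u else 0)
          * (if v ∈ Gf F then α v else 0) * K u v
        = ∑ v ∈ Gf F, (if u ∈ Gf F then α u else 0) * (if v ∈ Gf F then α v else 0) * K u v := by
      intro u
      refine (Finset.sum_subset hGG' fun v _ hv => ?_).symm
      rw [if_neg hv, mul_zero, zero_mul]
    have houter : ∑ u ∈ Gf F', ∑ v ∈ Gf F, (if u ∈ Gf F then α u else 0)
          * (if v ∈ Gf F then α v else 0) * K u v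
        = ∑ u ∈ Gf F, ∑ v ∈ Gf F, (if u ∈ Gf F then α u else 0)
          * (if v ∈ Gf F then α v else 0) * K u v := by
      refine (Finset.sum_subset hGG' fun u _ hu => ?_).symm
      refine Finset.sum_eq_zero fun v _ => ?_
      rw [if_neg hu, zero_mul, zero_mul]
    have hαα : ∑ u ∈ Gf F, ∑ v ∈ Gf F, (if u ∈ Gf F then α u else 0)
          * (if v ∈ Gf F then α v else 0) * K u v
        = ∑ u ∈ Gf F, ∑ v ∈ Gf F, α u * α v * K u v := by
      refine Finset.sum_congr rfl fun u hu => Finset.sum_congr rfl fun v hv => ?_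
      rw [if_pos hu, if_pos hv]
    calc (0:ℝ) ≤ ∑ u ∈ Gf F', ∑ v ∈ Gf F', (if u ∈ Gf F then α u else 0)
          * (if v ∈ Gf F then α v else 0) * K u v := h1
      _ = ∑ u ∈ Gf F', ∑ v ∈ Gf F, (if u ∈ Gf F then α u else 0)
          * (if v ∈ Gf F then α v else 0) * K u v :=
        Finset.sum_congr rfl fun u _ => hinner u
      _ = ∑ u ∈ Gf F, ∑ v ∈ Gf F, α u * α v * K u v := by rw [houter, hαα]
  have hCFne : ∀ F : Finset X, (CF F).Nonempty := by
    intro F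
    set G := Gf F with hG
    set E : Set (↥G × ↥G) := {p | ((p.1 : X), (p.2 : X)) ∈ Ω
      ∨ ((p.1:X),(p.2:X)) = (x,y) ∨ ((p.1:X),(p.2:X)) = (y,x)} with hE
    have hEmem : ∀ u v : ↥G, ((u,v) ∈ E ↔ ((u : X), (v : X)) ∈ Ω
        ∨ ((u:X),(v:X)) = (x,y) ∨ ((u:X),(v:X)) = (y,x)) := fun u v => Iff.rfl
    obtain ⟨B, hBpsd, hBeq⟩ := finite_duality E
      (by
        intro u v h
        rw [hEmem] at h
        rw [hEmem]
        rcases h with h | h | h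
        · exact Or.inl ((hΩ.1 _ _).mp h)
        · refine Or.inr (Or.inr ?_)
          rw [Prod.mk.injEq] at h ⊢
          exact ⟨h.2, h.1⟩
        · refine Or.inr (Or.inl ?_)
          rw [Prod.mk.injEq] at h ⊢
          exact ⟨h.2, h.1⟩)
      (fun u => Or.inl (hΩ.2 ↑u))
      (fun u v => if ((u:X),(v:X)) ∈ Ω then KΩ ↑u ↑v else t)
      (by
        intro u v h
        rw [hEmem] at h
        beta_reduce
        rcases h with h | h | h
        · rw [if_pos h, if_pos ((hΩ.1 _ _).mp h)]
          exact hsymm _ _ h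
        · rw [Prod.mk.injEq] at h
          rw [if_neg (h.1 ▸ h.2 ▸ hxy), if_neg (h.1 ▸ h.2 ▸ hyx)]
        · rw [Prod.mk.injEq] at h
          rw [if_neg (h.1 ▸ h.2 ▸ hyx), if_neg (h.1 ▸ h.2 ▸ hxy)])
      (by
        intro M hMpsd hMsupp
        have hMadm : Admissible Ω x y G M := by
          refine ⟨hMpsd, fun u v h => hMsupp u v fun hmem => h ?_⟩
          rcases hmem with hm | hm | hm
          · exact Set.mem_union_left _ hm
          · exact Set.mem_union_right _ (by rw [hm]; exact Set.mem_insert _ _)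
          · exact Set.mem_union_right _ (by rw [hm]; right; rfl)
        have hKf1 : ∀ u v : X, (u,v) ∈ Ω →
            (if (u,v) ∈ Ω then KΩ u v else t) = KΩ u v := fun u v h => if_pos h
        have hKf2 : (if (x,y) ∈ Ω then KΩ x y else t) = (if (y,x) ∈ Ω then KΩ y x else t) := by
          rw [if_neg hxy, if_neg hyx]
        have hdec := admissible_decomp Ω hΩ KΩ x y hxy G (hxG F) (hyG F) M hMadm
          (fun a b => if (a,b) ∈ Ω then KΩ a b else t) hKf1 hKf2
        have h0 := hQ G (hxG F) (hyG F) M hMadm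
        beta_reduce
        beta_reduce at hdec
        rw [hdec, if_neg hxy]
        exact h0)
    -- build the candidate completion on `G`, extended by `0`
    refine ⟨fun a b => if h : a ∈ G ∧ b ∈ G then B ⟨a,h.1⟩ ⟨b,h.2⟩ else 0, ?_⟩
    have hBsym : ∀ u v : ↥G, B u v = B v u := hBpsd.psdFun.1
    have hBdiag : ∀ u : ↥G, B u u = KΩ ↑u ↑u := by
      intro u
      rw [hBeq u u (Or.inl (hΩ.2 ↑u)), if_pos (hΩ.2 ↑u)]
    rw [hCFmem]
    refine ⟨⟨?_, ?_⟩, ⟨?_, ?_⟩⟩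
    · -- box membership
      intro a b
      by_cases h : a ∈ G ∧ b ∈ G
      · rw [dif_pos h]
        have hsq : (B ⟨a,h.1⟩ ⟨b,h.2⟩)^2 ≤ KΩ a a * KΩ b b := by
          have := psd_entry_sq_le hBpsd ⟨a,h.1⟩ ⟨b,h.2⟩
          rwa [hBdiag ⟨a,h.1⟩, hBdiag ⟨b,h.2⟩] at this
        have habs : |B ⟨a,h.1⟩ ⟨b,h.2⟩| ≤ c a b := by
          calc |B ⟨a,h.1⟩ ⟨b,h.2⟩| = Real.sqrt ((B ⟨a,h.1⟩ ⟨b,h.2⟩)^2) :=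
                (Real.sqrt_sq_eq_abs _).symm
            _ ≤ Real.sqrt (KΩ a a * KΩ b b) := Real.sqrt_le_sqrt hsq
            _ = c a b := rfl
        exact Set.mem_Icc.mpr (abs_le.mp habs)
      · rw [dif_neg h]
        exact Set.mem_Icc.mpr ⟨neg_nonpos.mpr (Real.sqrt_nonneg _), Real.sqrt_nonneg _⟩
    · -- value at (x, y)
      rw [dif_pos ⟨hxG F, hyG F⟩]
      rw [hBeq ⟨x, hxG F⟩ ⟨y, hyG F⟩ (Or.inr (Or.inl rfl)), if_neg hxy]
    · -- data and symmetry on G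
      intro u hu v hv
      constructor
      · intro huv
        rw [dif_pos ⟨hu, hv⟩, hBeq ⟨u,hu⟩ ⟨v,hv⟩ (Or.inl huv), if_pos huv]
      · rw [dif_pos ⟨hu, hv⟩, dif_pos ⟨hv, hu⟩, hBsym]
    · -- quadratic form
      intro α
      have := psd_form hBpsd (fun u : ↥G => α ↑u)
      calc (0:ℝ) ≤ ∑ u : ↥G, ∑ v : ↥G, α ↑u * α ↑v * B u v := this
        _ = ∑ u ∈ G, ∑ v ∈ G, α u * α v *
            (if h : u ∈ G ∧ v ∈ G then B ⟨u,h.1⟩ ⟨v,h.2⟩ else 0) := by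
          rw [← Finset.sum_coe_sort G (fun u => ∑ v ∈ G, α u * α v *
            (if h : u ∈ G ∧ v ∈ G then B ⟨u,h.1⟩ ⟨v,h.2⟩ else 0))]
          refine Finset.sum_congr rfl fun u _ => ?_
          rw [← Finset.sum_coe_sort G (fun v => α ↑u * α v *
            (if h : (↑u : X) ∈ G ∧ v ∈ G then B ⟨↑u,h.1⟩ ⟨v,h.2⟩ else 0))]
          refine Finset.sum_congr rfl fun v _ => ?_
          rw [dif_pos ⟨u.2, v.2⟩]
  have hdir : Directed (· ⊇ ·) CF := fun F1 F2 =>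
    ⟨F1 ∪ F2, hmono F1 _ Finset.subset_union_left, hmono F2 _ Finset.subset_union_right⟩
  obtain ⟨K, hK⟩ := IsCompact.nonempty_iInter_of_directed_nonempty_isCompact_isClosed
    CF hdir hCFne hCFcompact hCFclosed
  rw [Set.mem_iInter] at hK
  have hKF : ∀ F : Finset X,
      ((∀ u v : X, K u v ∈ Set.Icc (-(c u v)) (c u v)) ∧ K x y = t)
      ∧ ((∀ u ∈ Gf F, ∀ v ∈ Gf F, ((u,v) ∈ Ω → K u v = KΩ u v) ∧ K u v = K v u)
        ∧ ∀ α : X → ℝ, 0 ≤ ∑ u ∈ Gf F, ∑ v ∈ Gf F, α u * α v * K u v) :=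
    fun F => (hCFmem F K).mp (hK F)
  have hmem2 : ∀ u v : X, u ∈ Gf {u, v} ∧ v ∈ Gf {u, v} := by
    intro u v
    constructor <;> exact Finset.mem_union_left _ (by simp)
  have hsym' : ∀ u v : X, K u v = K v u := fun u v =>
    ((hKF {u,v}).2.1 u (hmem2 u v).1 v (hmem2 u v).2).2
  have hdata : ∀ u v : X, (u,v) ∈ Ω → K u v = KΩ u v := fun u v huv =>
    ((hKF {u,v}).2.1 u (hmem2 u v).1 v (hmem2 u v).2).1 huv
  have hKxy : K x y = t := (hKF ∅).1.2
  have hker : ∀ (n : ℕ) (α : Fin n → ℝ) (ξ : Fin n → X),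
      0 ≤ ∑ i, ∑ j, α i * α j * K (ξ i) (ξ j) := by
    intro n α ξ
    set F : Finset X := Finset.image ξ Finset.univ with hF
    have hmaps : ∀ i : Fin n, ξ i ∈ Gf F := fun i =>
      Finset.mem_union_left _ (Finset.mem_image_of_mem ξ (Finset.mem_univ i))
    set β : X → ℝ := fun a => ∑ i ∈ Finset.univ.filter (fun i => ξ i = a), α i with hβ
    have hform := (hKF F).2.2 β
    have key : ∑ i, ∑ j, α i * α j * K (ξ i) (ξ j)
        = ∑ u ∈ Gf F, ∑ v ∈ Gf F, β u * β v * K u v := by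
      calc ∑ i, ∑ j, α i * α j * K (ξ i) (ξ j)
          = ∑ i, ∑ v ∈ Gf F, ∑ j ∈ Finset.univ.filter (fun j => ξ j = v),
              α i * α j * K (ξ i) (ξ j) := by
            refine Finset.sum_congr rfl fun i _ => ?_
            exact (Finset.sum_fiberwise_of_maps_to (fun j _ => hmaps j) _).symm
        _ = ∑ i, ∑ v ∈ Gf F, α i * β v * K (ξ i) v := by
            refine Finset.sum_congr rfl fun i _ => Finset.sum_congr rfl fun v _ => ?_
            have hcg : ∀ j ∈ Finset.univ.filter (fun j => ξ j = v),
                α i * α j * K (ξ i) (ξ j) = (α i * K (ξ i) v) * α j := by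
              intro j hj
              rw [(Finset.mem_filter.mp hj).2]
              ring
            rw [Finset.sum_congr rfl hcg, ← Finset.mul_sum]
            simp only [hβ]
            ring
        _ = ∑ v ∈ Gf F, ∑ i, α i * β v * K (ξ i) v := Finset.sum_comm
        _ = ∑ v ∈ Gf F, ∑ u ∈ Gf F, ∑ i ∈ Finset.univ.filter (fun i => ξ i = u),
              α i * β v * K (ξ i) v := by
            refine Finset.sum_congr rfl fun v _ => ?_
            exact (Finset.sum_fiberwise_of_maps_to (fun i _ => hmaps i) _).symm
        _ = ∑ v ∈ Gf F, ∑ u ∈ Gf F, β u * β v * K u v := by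
            refine Finset.sum_congr rfl fun v _ => Finset.sum_congr rfl fun u _ => ?_
            have hcg : ∀ i ∈ Finset.univ.filter (fun i => ξ i = u),
                α i * β v * K (ξ i) v = (β v * K u v) * α i := by
              intro i hi
              rw [(Finset.mem_filter.mp hi).2]
              ring
            rw [Finset.sum_congr rfl hcg, ← Finset.mul_sum]
            simp only [hβ]
            ring
        _ = ∑ u ∈ Gf F, ∑ v ∈ Gf F, β u * β v * K u v := Finset.sum_comm
    rw [key]
    exact hform
  exact ⟨K, ⟨⟨hsym', hker⟩, hdata⟩, hKxy⟩

open scoped Classical in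
lemma rval_eq {X : Type*} (Ω : Set (X × X)) (KΩ : X → X → ℝ)
    (F : Finset X) (M : Matrix ↥F ↥F ℝ) (a b : ↥F) :
    Rval Ω KΩ F M a b = -(1 / (2 * M a b)) * ∑ u : ↥F, ∑ v : ↥F,
      if ((u : X), (v : X)) ∈ Ω then M u v * KΩ u v else 0 := rfl

/-- The maximum (resp. minimum) value of `K(x,y)` over completions `K` equals the infimum
(resp. supremum) of `ℛ_{xy}(M,F)` over admissible pairs with `m_{xy} < 0` (resp. `> 0`). -/
theorem sup_inf_completion_value {X : Type*}
    (Ω : Set (X × X)) (hΩ : IsCompletionDomain Ω) (KΩ : X → X → ℝ)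
    (hsymm : ∀ u v, (u, v) ∈ Ω → KΩ u v = KΩ v u)
    (hne : ∃ K : X → X → ℝ, IsCompletion Ω KΩ K)
    (x y : X) (hxy : (x, y) ∉ Ω) :
    sSup ((fun K : X → X → ℝ => K x y) '' {K | IsCompletion Ω KΩ K}) =
      sInf {r : ℝ | ∃ (F : Finset X) (hx : x ∈ F) (hy : y ∈ F) (M : Matrix ↥F ↥F ℝ),
        Admissible Ω x y F M ∧ M ⟨x, hx⟩ ⟨y, hy⟩ < 0 ∧
          r = Rval Ω KΩ F M ⟨x, hx⟩ ⟨y, hy⟩} ∧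
    sInf ((fun K : X → X → ℝ => K x y) '' {K | IsCompletion Ω KΩ K}) =
      sSup {r : ℝ | ∃ (F : Finset X) (hx : x ∈ F) (hy : y ∈ F) (M : Matrix ↥F ↥F ℝ),
        Admissible Ω x y F M ∧ 0 < M ⟨x, hx⟩ ⟨y, hy⟩ ∧
          r = Rval Ω KΩ F M ⟨x, hx⟩ ⟨y, hy⟩} := by
  classical
  obtain ⟨K₀, hK₀⟩ := hne
  have hxny : x ≠ y := fun h => hxy (h ▸ hΩ.2 x)
  have hyx : (y,x) ∉ Ω := fun h => hxy ((hΩ.1 x y).mpr h)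
  set S := (fun K : X → X → ℝ => K x y) '' {K | IsCompletion Ω KΩ K} with hS
  set Rneg := {r : ℝ | ∃ (F : Finset X) (hx : x ∈ F) (hy : y ∈ F) (M : Matrix ↥F ↥F ℝ),
        Admissible Ω x y F M ∧ M ⟨x, hx⟩ ⟨y, hy⟩ < 0 ∧
          r = Rval Ω KΩ F M ⟨x, hx⟩ ⟨y, hy⟩} with hRneg
  set Rpos := {r : ℝ | ∃ (F : Finset X) (hx : x ∈ F) (hy : y ∈ F) (M : Matrix ↥F ↥F ℝ),
        Admissible Ω x y F M ∧ 0 < M ⟨x, hx⟩ ⟨y, hy⟩ ∧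
          r = Rval Ω KΩ F M ⟨x, hx⟩ ⟨y, hy⟩} with hRpos
  -- every completion value is below every `Rneg` element and above every `Rpos` element
  have h1 : ∀ s ∈ S, ∀ r ∈ Rneg, s ≤ r := by
    rintro s ⟨K, hKc, rfl⟩ r ⟨F, hxF, hyF, M, hadm, hneg, rfl⟩
    have hp := completion_pairing Ω hΩ KΩ x y hxy F hxF hyF M hadm hKc
    rw [rval_eq]
    exact helper_le hneg hp
  have h2 : ∀ s ∈ S, ∀ r ∈ Rpos, r ≤ s := by
    rintro s ⟨K, hKc, rfl⟩ r ⟨F, hxF, hyF, M, hadm, hpos, rfl⟩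
    have hp := completion_pairing Ω hΩ KΩ x y hxy F hxF hyF M hadm hKc
    rw [rval_eq]
    exact helper_ge hpos hp
  have hSne : S.Nonempty := ⟨K₀ x y, K₀, hK₀, rfl⟩
  -- the sign pattern matrices give nonemptiness of `Rneg` and `Rpos`
  have hxmem : x ∈ ({x, y} : Finset X) := by simp
  have hymem : y ∈ ({x, y} : Finset X) := by simp
  have hcases : ∀ u : ↥({x, y} : Finset X), (u : X) = x ∨ (u : X) = y := by
    intro u
    rcases Finset.mem_insert.mp u.2 with h | h
    · exact Or.inl h
    · exact Or.inr (Finset.mem_singleton.mp h)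
  have hadm_rank1 : ∀ g : ↥({x, y} : Finset X) → ℝ,
      Admissible Ω x y {x, y} (Matrix.of fun u v => g u * g v) := by
    intro g
    refine ⟨(psdFun_rank1 g).posSemidef, fun u v h => ?_⟩
    exfalso
    apply h
    rcases hcases u with hu | hu <;> rcases hcases v with hv | hv
    · exact Set.mem_union_left _ (by rw [hu, hv]; exact hΩ.2 x)
    · exact Set.mem_union_right _ (by rw [hu, hv]; exact Set.mem_insert _ _)
    · exact Set.mem_union_right _ (by rw [hu, hv]; right; rfl)
    · exact Set.mem_union_left _ (by rw [hu, hv]; exact hΩ.2 y)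
  have hRnegne : Rneg.Nonempty := by
    set g : ↥({x, y} : Finset X) → ℝ := fun u => if (u : X) = x then 1 else -1 with hg
    refine ⟨Rval Ω KΩ {x,y} (Matrix.of fun u v => g u * g v) ⟨x,hxmem⟩ ⟨y,hymem⟩,
      {x,y}, hxmem, hymem, _, hadm_rank1 g, ?_, rfl⟩
    show g ⟨x,hxmem⟩ * g ⟨y,hymem⟩ < 0
    rw [hg]
    simp [hxny, Ne.symm hxny]
  have hRposne : Rpos.Nonempty := by
    refine ⟨Rval Ω KΩ {x,y} (Matrix.of fun _ _ => (1:ℝ) * 1) ⟨x,hxmem⟩ ⟨y,hymem⟩,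
      {x,y}, hxmem, hymem, _, hadm_rank1 (fun _ => 1), ?_, rfl⟩
    show (1:ℝ) * 1 > 0
    norm_num
  obtain ⟨r₀, hr₀⟩ := hRnegne
  obtain ⟨p₀, hp₀⟩ := hRposne
  have hbddS_above : BddAbove S := ⟨r₀, fun s hs => h1 s hs r₀ hr₀⟩
  have hbddS_below : BddBelow S := ⟨p₀, fun s hs => h2 s hs p₀ hp₀⟩
  have hbddRneg : BddBelow Rneg := ⟨K₀ x y, fun r hr => h1 _ ⟨K₀, hK₀, rfl⟩ r hr⟩
  have hbddRpos : BddAbove Rpos := ⟨K₀ x y, fun r hr => h2 _ ⟨K₀, hK₀, rfl⟩ r hr⟩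
  have le1 : sSup S ≤ sInf Rneg :=
    csSup_le hSne fun s hs => le_csInf ⟨r₀, hr₀⟩ fun r hr => h1 s hs r hr
  have le2 : sSup Rpos ≤ sInf S :=
    csSup_le ⟨p₀, hp₀⟩ fun r hr => le_csInf hSne fun s hs => h2 s hs r hr
  -- the hypotheses of the completion existence lemma for `sInf Rneg` and `sSup Rpos`
  have hQgen : ∀ t : ℝ, (∀ r ∈ Rneg, t ≤ r) → (∀ r ∈ Rpos, r ≤ t) →
      ∀ (F : Finset X) (hxF : x ∈ F) (hyF : y ∈ F) (M : Matrix ↥F ↥F ℝ),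
        Admissible Ω x y F M →
        0 ≤ (∑ u : ↥F, ∑ v : ↥F, if ((u : X), (v : X)) ∈ Ω then M u v * KΩ ↑u ↑v else 0)
            + 2 * M ⟨x,hxF⟩ ⟨y,hyF⟩ * t := by
    intro t htn htp F hxF hyF M hadm
    rcases lt_trichotomy (M ⟨x,hxF⟩ ⟨y,hyF⟩) 0 with hm | hm | hm
    · have hrmem : Rval Ω KΩ F M ⟨x,hxF⟩ ⟨y,hyF⟩ ∈ Rneg :=
        ⟨F, hxF, hyF, M, hadm, hm, rfl⟩
      have := htn _ hrmem
      rw [rval_eq] at this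
      exact helper_Qneg hm this
    · have hp := completion_pairing Ω hΩ KΩ x y hxy F hxF hyF M hadm hK₀
      rw [hm] at hp ⊢
      simpa using hp
    · have hrmem : Rval Ω KΩ F M ⟨x,hxF⟩ ⟨y,hyF⟩ ∈ Rpos :=
        ⟨F, hxF, hyF, M, hadm, hm, rfl⟩
      have := htp _ hrmem
      rw [rval_eq] at this
      exact helper_Qpos hm this
  -- `sInf Rneg` is attained by a completion
  have ht1 : sInf Rneg ∈ S := by
    obtain ⟨K1, hK1c, hK1xy⟩ := exists_completion_with_value Ω hΩ KΩ hsymm x y hxy (sInf Rneg)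
      (hQgen (sInf Rneg)
        (fun r hr => csInf_le hbddRneg hr)
        (fun r hr => le_trans (le_csSup hbddRpos hr)
          (le_trans le2 (le_csInf ⟨r₀, hr₀⟩ fun r' hr' => h1 _ ⟨K₀, hK₀, rfl⟩ r' hr'
            |> fun h => le_trans (csInf_le hbddS_below ⟨K₀, hK₀, rfl⟩) h))))
    exact ⟨K1, hK1c, hK1xy⟩
  have ht2 : sSup Rpos ∈ S := by
    obtain ⟨K2, hK2c, hK2xy⟩ := exists_completion_with_value Ω hΩ KΩ hsymm x y hxy (sSup Rpos)
      (hQgen (sSup Rpos)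
        (fun r hr => le_trans
          (le_trans (le_trans le2 (csInf_le hbddS_below ⟨K₀, hK₀, rfl⟩))
            (h1 _ ⟨K₀, hK₀, rfl⟩ r hr)) (le_refl r))
        (fun r hr => le_csSup hbddRpos hr))
    exact ⟨K2, hK2c, hK2xy⟩
  exact ⟨le_antisymm le1 (le_csSup hbddS_above ht1),
    le_antisymm (csInf_le hbddS_below ht2) le2⟩
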